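/- Let A ∈ ℝ^{n×n} with det A > 0 and ‖A‖ⁿ ≤ K · det A for the operator norm ‖·‖. Then the adjugate satisfies ‖adj(A)‖ⁿ ≤ K^{n-1} · det(adj(A)). -/

import Mathlib

open Matrix MeasureTheory

noncomputable def msqrt {n : ℕ} (A : Matrix (Fin n) (Fin n) ℝ) : Matrix (Fin n) (Fin n) ℝ :=
  ((Matrix.posSemidef_conjTranspose_mul_self A).isHermitian.eigenvectorUnitary : Matrix (Fin n) (Fin n) ℝ) *
    diagonal ((↑) ∘ (Real.sqrt ·) ∘ (Matrix.posSemidef_conjTranspose_mul_self A).isHermitian.eigenvalues) *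
    (star ((Matrix.posSemidef_conjTranspose_mul_self A).isHermitian.eigenvectorUnitary : Matrix (Fin n) (Fin n) ℝ))

noncomputable def frobNorm {n : ℕ} (A : Matrix (Fin n) (Fin n) ℝ) : ℝ :=
  Real.sqrt (∑ i, ∑ j, (A i j) ^ 2)

noncomputable def opNorm {n : ℕ} (A : Matrix (Fin n) (Fin n) ℝ) : ℝ :=
  ‖Matrix.toEuclideanCLM (𝕜 := ℝ) A‖

noncomputable def sLam {n : ℕ} (A : Matrix (Fin n) (Fin n) ℝ) : ℝ :=
  sInf {y | ∃ v : EuclideanSpace ℝ (Fin n), ‖v‖ = 1 ∧ y = ‖Matrix.toEuclideanCLM (𝕜 := ℝ) A v‖}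

open scoped Matrix.Norms.L2Operator in
lemma aux_norm_le_of_mulVec_eigen {n : ℕ} (M : Matrix (Fin n) (Fin n) ℝ)
    (b : OrthonormalBasis (Fin n) ℝ (EuclideanSpace ℝ (Fin n))) (μ : Fin n → ℝ) (c : ℝ)
    (hc : 0 ≤ c) (hμ : ∀ i, |μ i| ≤ c)
    (hb : ∀ i, M *ᵥ ⇑(b i) = μ i • ⇑(b i)) :
    ‖M‖ ≤ c := by
  rw [Matrix.cstar_norm_def]
  set T := Matrix.toEuclideanCLM (𝕜 := ℝ) M with hT
  have hTb : ∀ i, T (b i) = μ i • b i := by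
    intro i
    apply (WithLp.equiv 2 (Fin n → ℝ)).injective
    simpa [hT] using hb i
  refine T.opNorm_le_bound hc (fun x => ?_)
  set w := b.repr x with hw
  set v : EuclideanSpace ℝ (Fin n) := WithLp.toLp 2 (fun i => μ i * w i : Fin n → ℝ) with hv
  have hTx : T x = b.repr.symm v := by
    rw [← b.sum_repr_symm]
    conv_lhs => rw [← b.sum_repr x]
    rw [map_sum]
    refine Finset.sum_congr rfl fun i _ => ?_
    rw [T.map_smul, hTb i, smul_smul, mul_comm]
  rw [hTx, LinearIsometryEquiv.norm_map]
  have hwx : ‖w‖ = ‖x‖ := b.repr.norm_map x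
  rw [← hwx]
  rw [EuclideanSpace.norm_eq, EuclideanSpace.norm_eq]
  rw [← Real.sqrt_sq hc, ← Real.sqrt_mul (by positivity)]
  apply Real.sqrt_le_sqrt
  rw [Finset.mul_sum]
  refine Finset.sum_le_sum fun i _ => ?_
  have : ‖v i‖ = |μ i| * ‖w i‖ := by
    simp [hv, abs_mul]
  rw [this, mul_pow]
  have h1 : |μ i| ^ 2 ≤ c ^ 2 := by
    have := hμ i
    nlinarith [abs_nonneg (μ i)]
  exact mul_le_mul_of_nonneg_right h1 (sq_nonneg _)

open scoped Matrix.Norms.L2Operator in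
lemma aux_norm_adjugate_le {n : ℕ} (hn : 0 < n) (A : Matrix (Fin n) (Fin n) ℝ)
    (hdet : 0 < A.det) : opNorm A.adjugate ≤ opNorm A ^ (n - 1) := by
  have hop : ∀ M : Matrix (Fin n) (Fin n) ℝ, opNorm M = ‖M‖ := fun M => rfl
  rw [hop, hop]
  have hd : A.det ≠ 0 := ne_of_gt hdet
  set B := A * Aᴴ with hBdef
  have hB : B.IsHermitian := Matrix.isHermitian_mul_conjTranspose_self A
  have hdetB : B.det = A.det ^ 2 := by
    rw [hBdef, Matrix.det_mul, Matrix.det_conjTranspose, star_trivial, sq]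
  have hdetBpos : 0 < B.det := by rw [hdetB]; positivity
  set b := hB.eigenvectorBasis with hb
  set lam := hB.eigenvalues with hlam
  have heig : ∀ i, B *ᵥ ⇑(b i) = lam i • ⇑(b i) := hB.mulVec_eigenvectorBasis
  have hprod : B.det = ∏ i, lam i := by
    simpa using hB.det_eq_prod_eigenvalues
  have hlampos : ∀ i, 0 < lam i := by
    intro i
    have hne : lam i ≠ 0 := by
      intro h0
      rw [hprod] at hdetBpos
      exact absurd (Finset.prod_eq_zero (Finset.mem_univ i) h0) (ne_of_gt hdetBpos)
    have hsd := Matrix.posSemidef_self_mul_conjTranspose A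
    have hnn : 0 ≤ lam i := hsd.eigenvalues_nonneg i
    exact lt_of_le_of_ne hnn (Ne.symm hne)
  have hnormB : ‖B‖ = ‖A‖ ^ 2 := by
    have h2 : B = Aᴴᴴ * Aᴴ := by rw [Matrix.conjTranspose_conjTranspose]
    rw [h2, Matrix.l2_opNorm_conjTranspose_mul_self, Matrix.l2_opNorm_conjTranspose, sq]
  have hlamle : ∀ i, lam i ≤ ‖A‖ ^ 2 := by
    intro i
    have h1 : ‖(EuclideanSpace.equiv (Fin n) ℝ).symm <| B *ᵥ ⇑(b i)‖ ≤ ‖B‖ * ‖b i‖ :=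
      Matrix.l2_opNorm_mulVec B (b i)
    rw [heig i, _root_.map_smul, norm_smul] at h1
    have hbi : ‖b i‖ = 1 := b.orthonormal.1 i
    have hbi2 : ‖(EuclideanSpace.equiv (Fin n) ℝ).symm ⇑(b i)‖ = 1 := hbi
    rw [hbi2, hbi, mul_one, mul_one, Real.norm_eq_abs, abs_of_pos (hlampos i), hnormB] at h1
    exact h1
  -- invertibility of B and eigenvectors of the inverse
  have hdB : IsUnit B.det := isUnit_iff_ne_zero.mpr (ne_of_gt hdetBpos)
  have hBinv : ∀ i, B⁻¹ *ᵥ ⇑(b i) = (lam i)⁻¹ • ⇑(b i) := by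
    intro i
    have h2 : B⁻¹ *ᵥ (B *ᵥ ⇑(b i)) = ⇑(b i) := by
      rw [Matrix.mulVec_mulVec, Matrix.nonsing_inv_mul B hdB, Matrix.one_mulVec]
    rw [heig i, Matrix.mulVec_smul] at h2
    calc B⁻¹ *ᵥ ⇑(b i) = (lam i)⁻¹ • (lam i • (B⁻¹ *ᵥ ⇑(b i))) := by
          rw [smul_smul, inv_mul_cancel₀ (ne_of_gt (hlampos i)), one_smul]
      _ = (lam i)⁻¹ • ⇑(b i) := by rw [h2]
  haveI : Nonempty (Fin n) := ⟨⟨0, hn⟩⟩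
  obtain ⟨i0, -, hi0⟩ := Finset.exists_min_image Finset.univ lam ⟨⟨0, hn⟩, Finset.mem_univ _⟩
  have hBinvnorm : ‖B⁻¹‖ ≤ (lam i0)⁻¹ := by
    refine aux_norm_le_of_mulVec_eigen B⁻¹ b (fun i => (lam i)⁻¹) _
      (inv_nonneg.mpr (hlampos i0).le) (fun i => ?_) hBinv
    have : |(lam i)⁻¹| = (lam i)⁻¹ := abs_of_pos (inv_pos.mpr (hlampos i))
    simp only [this]
    exact inv_anti₀ (hlampos i0) (hi0 i (Finset.mem_univ i))
  have hAinv : ‖A⁻¹‖ ^ 2 = ‖B⁻¹‖ := by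
    have h3 : B⁻¹ = (A⁻¹)ᴴ * A⁻¹ := by
      rw [hBdef, Matrix.mul_inv_rev, Matrix.conjTranspose_nonsing_inv]
    rw [h3, Matrix.l2_opNorm_conjTranspose_mul_self, sq]
  have hadj : A.adjugate = A.det • A⁻¹ := by
    rw [Matrix.inv_def, smul_smul, Ring.inverse_eq_inv', mul_inv_cancel₀ hd, one_smul]
  have hadjnorm : ‖A.adjugate‖ = A.det * ‖A⁻¹‖ := by
    rw [hadj, norm_smul, Real.norm_eq_abs, abs_of_pos hdet]
  -- the squared estimate
  have hsq : ‖A.adjugate‖ ^ 2 ≤ (‖A‖ ^ (n - 1)) ^ 2 := by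
    have e1 : ‖A.adjugate‖ ^ 2 = B.det * ‖B⁻¹‖ := by
      rw [hadjnorm, mul_pow, hAinv, hdetB]
    have e2 : B.det * ‖B⁻¹‖ ≤ B.det * (lam i0)⁻¹ :=
      mul_le_mul_of_nonneg_left hBinvnorm (le_of_lt hdetBpos)
    have e3 : B.det * (lam i0)⁻¹ = ∏ i ∈ Finset.univ.erase i0, lam i := by
      rw [hprod, ← Finset.mul_prod_erase Finset.univ lam (Finset.mem_univ i0)]
      rw [mul_comm (lam i0), mul_assoc, mul_inv_cancel₀ (ne_of_gt (hlampos i0)), mul_one]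
    have e4 : ∏ i ∈ Finset.univ.erase i0, lam i ≤ ∏ _i ∈ Finset.univ.erase i0, ‖A‖ ^ 2 :=
      Finset.prod_le_prod (fun i _ => (hlampos i).le) (fun i _ => hlamle i)
    have e5 : ∏ _i ∈ Finset.univ.erase i0, ‖A‖ ^ 2 = (‖A‖ ^ (n - 1)) ^ 2 := by
      rw [Finset.prod_const, Finset.card_erase_of_mem (Finset.mem_univ i0), Finset.card_univ,
        Fintype.card_fin, ← pow_mul, ← pow_mul, mul_comm]
    rw [e1, ← e5]
    exact le_trans e2 (e3 ▸ e4)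
  nlinarith [hsq, norm_nonneg A.adjugate, pow_nonneg (norm_nonneg A) (n - 1)]


/-- The dilatation estimate for the adjugate. -/
theorem stmt_5 {n : ℕ} (A : Matrix (Fin n) (Fin n) ℝ) (K : ℝ)
    (hdet : 0 < A.det) (h : opNorm A ^ n ≤ K * A.det) :
    opNorm A.adjugate ^ n ≤ K ^ (n - 1) * A.adjugate.det := by
  rcases Nat.eq_zero_or_pos n with hn | hn
  · subst hn
    simp [Matrix.det_isEmpty]
  have hnn : 0 ≤ opNorm A := norm_nonneg _
  have hnnp : 0 ≤ opNorm A ^ n := pow_nonneg hnn n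
  have key : opNorm A.adjugate ≤ opNorm A ^ (n - 1) := aux_norm_adjugate_le hn A hdet
  have hdetadj : A.adjugate.det = A.det ^ (n - 1) := by
    rw [Matrix.det_adjugate, Fintype.card_fin]
  calc opNorm A.adjugate ^ n ≤ (opNorm A ^ (n - 1)) ^ n :=
        pow_le_pow_left₀ (norm_nonneg _) key n
    _ = (opNorm A ^ n) ^ (n - 1) := by rw [← pow_mul, ← pow_mul, mul_comm]
    _ ≤ (K * A.det) ^ (n - 1) := pow_le_pow_left₀ hnnp h (n - 1)
    _ = K ^ (n - 1) * A.det ^ (n - 1) := mul_pow _ _ _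
    _ = K ^ (n - 1) * A.adjugate.det := by rw [hdetadj]
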